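/- Given a non-alternating parity word automaton B over alphabet Σ, one can construct a non-alternating parity tree automaton A over Σ such that A accepts exactly those Σ-labelled trees containing at least one branch whose word is accepted by B; moreover A uses one additional state beyond those of B, and its EU-pairs have existential parts of size 1 and universal parts of size 1. -/

import Mathlib

/-- A `Σ`-labelled tree of arbitrary (finite) arity over direction set `D`. -/
structure STree (D : Type) (A : Type) where
  nodes : Set (List D)
  root_mem : ([] : List D) ∈ nodes
  prefix_closed : ∀ n d, n ++ [d] ∈ nodes → n ∈ nodes
  label : List D → A

/-- An EU-pair over state set `Q`. -/
abbrev EUPair (Q : Type) := Multiset Q × Set Q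

/-- The marking `ν` of the `children` satisfies the EU-pair `p`: a nodup family
`m` of children realises the existential part `p.1`, and every remaining child is
marked with a state in `p.2`. -/
def SatEU {D Q : Type} (children : Set D) (ν : D → Set Q) (p : EUPair Q) : Prop :=
  ∃ f : D → Q, (∀ d ∈ children, f d ∈ ν d) ∧
    ∃ m : Multiset D, m.Nodup ∧ (∀ d ∈ m, d ∈ children) ∧
      m.map f = p.1 ∧ ∀ d ∈ children, d ∉ m → f d ∈ p.2

/-- Parity acceptance: the least priority occurring infinitely often is even. -/
def ParitySeq (s : ℕ → ℕ) : Prop :=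
  Even (sInf {c | {k | s k = c}.Infinite})

/-- Non-alternating EU parity tree automaton: transitions are disjunctions
(sets) of EU-pairs. -/
structure NPTA (A : Type) where
  Q : Type
  init : Q
  δ : Q → A → Set (EUPair Q)
  ω : Q → ℕ

/-- Acceptance for non-alternating automata: a run assigns one state to each
node, locally some disjunct of the transition is satisfied, and along every
infinite branch the parity condition holds (finite branches are accepting). -/
def NPTA.Accepts {A : Type} (M : NPTA A) {D : Type} (T : STree D A) : Prop :=
  ∃ ρ : List D → M.Q, ρ [] = M.init ∧
    (∀ n ∈ T.nodes, ∃ p ∈ M.δ (ρ n) (T.label n),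
      SatEU {d | n ++ [d] ∈ T.nodes} (fun d => ({ρ (n ++ [d])} : Set M.Q)) p) ∧
    ∀ b : ℕ → D, (∀ k, (List.range k).map b ∈ T.nodes) →
      ParitySeq (fun k => M.ω (ρ ((List.range k).map b)))

/-- Non-alternating parity word automaton. -/
structure NPWA (A : Type) where
  Q : Type
  init : Q
  δ : Q → A → Set Q
  ω : Q → ℕ

/-- `B` accepts the infinite word `w`: some execution satisfies the parity
condition. -/
def NPWA.AcceptsInf {A : Type} (B : NPWA A) (w : ℕ → A) : Prop :=
  ∃ s : ℕ → B.Q, s 0 = B.init ∧ (∀ k, s (k + 1) ∈ B.δ (s k) (w k)) ∧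
    ParitySeq (fun k => B.ω (s k))

/-- `B` accepts the finite word `w`: some execution exists (no parity
constraint on finite words). -/
def NPWA.AcceptsFin {A : Type} (B : NPWA A) (w : List A) : Prop :=
  ∃ s : ℕ → B.Q, s 0 = B.init ∧
    ∀ k, (h : k < w.length) → s (k + 1) ∈ B.δ (s k) (w.get ⟨k, h⟩)


lemma paritySeq_of_eventually_zero (s : ℕ → ℕ) (N : ℕ) (h : ∀ k, N ≤ k → s k = 0) :
    ParitySeq s := by
  have h0 : (0:ℕ) ∈ {c | {k | s k = c}.Infinite} := by
    have hsub : Set.Ici N ⊆ {k | s k = 0} := fun k hk => h k hk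
    exact (Set.Ici_infinite N).mono hsub
  have h1 : sInf {c | {k | s k = c}.Infinite} = 0 := Nat.le_zero.mp (Nat.sInf_le h0)
  unfold ParitySeq
  simp [h1]

lemma paritySeq_add_two (s : ℕ → ℕ) : ParitySeq (fun k => s k + 2) ↔ ParitySeq s := by
  have himg : {c | {k | s k + 2 = c}.Infinite} = (· + 2) '' {c | {k | s k = c}.Infinite} := by
    ext c
    constructor
    · intro hc
      obtain ⟨k, hk⟩ := hc.nonempty
      simp only [Set.mem_setOf_eq] at hk
      refine ⟨s k, ?_, hk⟩
      have heq : {k' | s k' = s k} = {k' | s k' + 2 = c} := by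
        ext k'; simp only [Set.mem_setOf_eq]; omega
      simpa [Set.mem_setOf_eq, heq] using hc
    · rintro ⟨d, hd, rfl⟩
      have heq : {k | s k + 2 = d + 2} = {k | s k = d} := by ext k'; simp
      simpa [Set.mem_setOf_eq, heq] using hd
  unfold ParitySeq
  rw [himg]
  by_cases hS : {c | {k | s k = c}.Infinite}.Nonempty
  · have h1 : sInf ((· + 2) '' {c | {k | s k = c}.Infinite}) = sInf {c | {k | s k = c}.Infinite} + 2 := by
      apply le_antisymm
      · exact Nat.sInf_le ⟨_, Nat.sInf_mem hS, rfl⟩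
      · obtain ⟨a, ha, heq⟩ := Nat.sInf_mem (hS.image (· + 2))
        rw [← heq]
        exact Nat.add_le_add_right (Nat.sInf_le ha) 2
    rw [h1]
    simp [Nat.even_add]
  · rw [Set.not_nonempty_iff_eq_empty] at hS
    simp [hS]

lemma STree.mem_of_prefix {D A : Type} (T : STree D A) {m n : List D}
    (h : m <+: n) (hn : n ∈ T.nodes) : m ∈ T.nodes := by
  obtain ⟨l, rfl⟩ := h
  induction l using List.reverseRecOn with
  | nil => simpa using hn
  | append_singleton l d ih =>
    exact ih (T.prefix_closed (m ++ l) d (by simpa [List.append_assoc] using hn))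

/-- The tree automaton constructed from `B`. -/
@[reducible]
def NPWA.toNPTA {A : Type} (B : NPWA A) : NPTA A where
  Q := Option B.Q
  init := some B.init
  δ := fun q a =>
    match q with
    | none => {((0 : Multiset (Option B.Q)), ({none} : Set (Option B.Q)))}
    | some q => {p | (∃ q' ∈ B.δ q a, p = ({some q'}, ({none} : Set (Option B.Q)))) ∨
        ((B.δ q a).Nonempty ∧ p = (0, (∅ : Set (Option B.Q))))}
  ω := fun q => match q with | none => 0 | some q => B.ω q + 2

lemma accepts_of_inf {A D : Type} (B : NPWA A) (T : STree D A) (b : ℕ → D)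
    (hb : ∀ k, (List.range k).map b ∈ T.nodes)
    (hacc : B.AcceptsInf (fun k => T.label ((List.range k).map b))) :
    B.toNPTA.Accepts T := by
  obtain ⟨s, hs0, hstr, hspar⟩ := hacc
  classical
  set pref : ℕ → List D := fun k => (List.range k).map b with hpref
  have hpreflen : ∀ k, (pref k).length = k := by intro k; simp [hpref]
  have hpstep : ∀ k, pref (k+1) = pref k ++ [b k] := by
    intro k; simp [hpref, List.range_succ]
  refine ⟨fun n => if n = pref n.length then some (s n.length) else none,
    by simp [hpref, hs0, NPWA.toNPTA], ?_, ?_⟩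
  · -- local conditions
    intro n hn
    by_cases hsome : n = pref n.length
    · -- n is on the branch
      set k := n.length with hk
      refine ⟨({some (s (k+1))}, ({none} : Set (Option B.Q))), ?_, ?_⟩
      · show _ ∈ B.toNPTA.δ (if n = pref n.length then some (s n.length) else none) (T.label n)
        rw [if_pos hsome]
        exact Or.inl ⟨s (k+1), by simpa [hpref, hsome] using hstr k, rfl⟩
      · refine ⟨fun d => if n ++ [d] = pref (n ++ [d]).length then some (s (n ++ [d]).length) else none,
          fun d _ => rfl, {b k}, Multiset.nodup_singleton _, ?_, ?_, ?_⟩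
        · intro d hd
          rw [Multiset.mem_singleton] at hd
          subst hd
          have h2 : n ++ [b k] = pref (k+1) := by rw [hpstep, hsome]
          simpa [Set.mem_setOf_eq, h2, hpref] using hb (k+1)
        · have hlen : (n ++ [b k]).length = k + 1 := by simp [hk]
          have h2 : n ++ [b k] = pref (k+1) := by rw [hpstep, hsome]
          simp [Multiset.map_singleton, hlen, h2]
          exact ⟨rfl, rfl⟩
        · intro d _ hd
          rw [Multiset.mem_singleton] at hd
          have hlen : (n ++ [d]).length = k + 1 := by simp [hk]
          have hne : n ++ [d] ≠ pref (k + 1) := by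
            intro hcon
            rw [hpstep, ← hsome] at hcon
            exact hd (by simpa using hcon)
          simp [hlen, hne]
    · -- off the branch
      refine ⟨((0 : Multiset (Option B.Q)), ({none} : Set (Option B.Q))), ?_, ?_⟩
      · show _ ∈ B.toNPTA.δ (if n = pref n.length then some (s n.length) else none) (T.label n)
        rw [if_neg hsome]; rfl
      · refine ⟨fun d => if n ++ [d] = pref (n ++ [d]).length then some (s (n ++ [d]).length) else none,
          fun d _ => rfl, 0, Multiset.nodup_zero, by simp, by simp, ?_⟩
        intro d _ _
        have hlen : (n ++ [d]).length = n.length + 1 := by simp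
        have hne : n ++ [d] ≠ pref (n.length + 1) := by
          intro hcon
          rw [hpstep] at hcon
          exact hsome (List.append_inj_left' hcon (by simp [hpreflen]))
        simp [hlen, hne]
  · -- parity on all branches
    intro b' hb'
    by_cases hsame : ∀ k, (List.range k).map b' = pref k
    · have h2 : ParitySeq (fun k => B.ω (s k) + 2) := (paritySeq_add_two _).mpr hspar
      convert h2 using 2 with k
      beta_reduce
      have h1 : ((List.range k).map b').length = k := by simp
      rw [h1, if_pos (hsame k)]
    · push_neg at hsame
      obtain ⟨k, hk⟩ := hsame
      apply paritySeq_of_eventually_zero _ k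
      intro j hj
      have hne : (List.range j).map b' ≠ pref j := by
        intro hcon
        apply hk
        have h1 : (List.range k).map b' = ((List.range j).map b').take k := by
          rw [← List.map_take, List.take_range, Nat.min_eq_left hj]
        have h2 : pref k = (pref j).take k := by
          show (List.range k).map b = ((List.range j).map b).take k
          rw [← List.map_take, List.take_range, Nat.min_eq_left hj]
        rw [h1, h2, hcon]
      have hlen : ((List.range j).map b').length = j := by simp
      show B.toNPTA.ω (if (List.range j).map b' = pref ((List.range j).map b').length then some (s ((List.range j).map b').length) else none) = 0
      rw [hlen, if_neg hne]

lemma accepts_of_fin {A D : Type} (B : NPWA A) (T : STree D A) (n : List D)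
    (hn : n ∈ T.nodes) (hmax : ∀ d, n ++ [d] ∉ T.nodes)
    (hacc : B.AcceptsFin ((List.range (n.length + 1)).map (fun k => T.label (n.take k)))) :
    B.toNPTA.Accepts T := by
  classical
  obtain ⟨s, hs0, hstr⟩ := hacc
  have hw : ∀ k, k < n.length + 1 → s (k + 1) ∈ B.δ (s k) (T.label (n.take k)) := by
    intro k hk
    have hlt : k < ((List.range (n.length + 1)).map (fun k => T.label (n.take k))).length := by
      simpa using hk
    have := hstr k hlt
    simpa using this
  refine ⟨fun m => if m <+: n then some (s m.length) else none, ?_, ?_, ?_⟩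
  · simp [List.nil_prefix, hs0, NPWA.toNPTA]
  · intro m hm
    by_cases hpre : m <+: n
    · by_cases hmn : m = n
      · subst hmn
        -- leaf node
        refine ⟨((0 : Multiset (Option B.Q)), (∅ : Set (Option B.Q))), ?_, ?_⟩
        · show _ ∈ B.toNPTA.δ (if m <+: m then some (s m.length) else none) (T.label m)
          rw [if_pos (List.prefix_refl m)]
          refine Or.inr ⟨⟨s (m.length + 1), ?_⟩, rfl⟩
          have := hw m.length (Nat.lt_succ_self _)
          simpa [List.take_length] using this
        · refine ⟨fun _ => none, ?_, 0, Multiset.nodup_zero, by simp, by simp, ?_⟩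
          · intro d hd; exact absurd hd (hmax d)
          · intro d hd _; exact absurd hd (hmax d)
      · -- proper prefix of n
        have hlt : m.length < n.length := by
          rcases Nat.lt_or_ge m.length n.length with h | h
          · exact h
          · exact absurd (List.IsPrefix.eq_of_length_le hpre h) hmn
        set d₀ := n.get ⟨m.length, hlt⟩ with hd₀
        have htake : m = n.take m.length := List.prefix_iff_eq_take.mp hpre
        have hm1 : m ++ [d₀] = n.take (m.length + 1) := by
          conv_lhs => rw [htake]
          rw [hd₀, List.get_eq_getElem, ← List.concat_eq_append]
          exact List.take_concat_get hlt
        have hm1p : m ++ [d₀] <+: n := hm1 ▸ List.take_prefix _ n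
        have hm1len : (m ++ [d₀]).length = m.length + 1 := by simp
        refine ⟨({some (s (m.length + 1))}, ({none} : Set (Option B.Q))), ?_, ?_⟩
        · show _ ∈ B.toNPTA.δ (if m <+: n then some (s m.length) else none) (T.label m)
          rw [if_pos hpre]
          refine Or.inl ⟨s (m.length + 1), ?_, rfl⟩
          have := hw m.length (by omega)
          rwa [← htake] at this
        · refine ⟨fun d => if m ++ [d] <+: n then some (s (m ++ [d]).length) else none,
            fun d _ => rfl, {d₀}, Multiset.nodup_singleton _, ?_, ?_, ?_⟩
          · intro d hd
            rw [Multiset.mem_singleton] at hd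
            subst hd
            exact T.mem_of_prefix hm1p hn
          · rw [Multiset.map_singleton]
            rw [if_pos hm1p, hm1len]
          · intro d _ hd
            rw [Multiset.mem_singleton] at hd
            have hne : ¬ m ++ [d] <+: n := by
              intro hcon
              have : m ++ [d] = n.take (m.length + 1) := by
                rw [List.prefix_iff_eq_take.mp hcon]; simp
              rw [← hm1] at this
              exact hd (by simpa using this)
            simp [hne]
    · -- off the accepted branch
      refine ⟨((0 : Multiset (Option B.Q)), ({none} : Set (Option B.Q))), ?_, ?_⟩
      · show _ ∈ B.toNPTA.δ (if m <+: n then some (s m.length) else none) (T.label m)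
        rw [if_neg hpre]; rfl
      · refine ⟨fun d => if m ++ [d] <+: n then some (s (m ++ [d]).length) else none,
          fun d _ => rfl, 0, Multiset.nodup_zero, by simp, by simp, ?_⟩
        intro d _ _
        have hne : ¬ m ++ [d] <+: n := fun hcon =>
          hpre (((List.prefix_append m [d]).trans hcon))
        simp [hne]
  · -- parity: every infinite branch eventually leaves the prefixes of n
    intro b' hb'
    apply paritySeq_of_eventually_zero _ (n.length + 1)
    intro j hj
    have hne : ¬ (List.range j).map b' <+: n := by
      intro hcon
      have := hcon.length_le
      simp at this
      omega
    show B.toNPTA.ω (if (List.range j).map b' <+: n then some (s ((List.range j).map b').length) else none) = 0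
    rw [if_neg hne]

lemma accepts_imp {A D : Type} (B : NPWA A) (T : STree D A)
    (h : B.toNPTA.Accepts T) :
    (∃ b : ℕ → D, (∀ k, (List.range k).map b ∈ T.nodes) ∧
        B.AcceptsInf (fun k => T.label ((List.range k).map b))) ∨
    (∃ n ∈ T.nodes, (∀ d, n ++ [d] ∉ T.nodes) ∧
        B.AcceptsFin ((List.range (n.length + 1)).map (fun k => T.label (n.take k)))) := by
  classical
  obtain ⟨ρ, h0, hloc, hpar⟩ := h
  -- local step analysis
  have hstep : ∀ n, n ∈ T.nodes → ∀ q, ρ n = some q →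
      ((∀ d, n ++ [d] ∉ T.nodes) ∧ (B.δ q (T.label n)).Nonempty) ∨
      (∃ d, n ++ [d] ∈ T.nodes ∧ ∃ q', q' ∈ B.δ q (T.label n) ∧ ρ (n ++ [d]) = some q' ∧
        ∀ d', n ++ [d'] ∈ T.nodes → d' ≠ d → ρ (n ++ [d']) = none) := by
    intro n hn q hq
    obtain ⟨p, hp, hsat⟩ := hloc n hn
    rw [hq] at hp
    have hp' : (∃ q' ∈ B.δ q (T.label n), p = ({some q'}, ({none} : Set (Option B.Q)))) ∨
        ((B.δ q (T.label n)).Nonempty ∧ p = ((0 : Multiset (Option B.Q)), (∅ : Set (Option B.Q)))) := hp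
    obtain ⟨f, hf, ms, hnd, hmc, hmap, hrest⟩ := hsat
    rcases hp' with ⟨q', hq', rfl⟩ | ⟨hne, rfl⟩
    · -- existential pair
      obtain ⟨d, rfl, hfd⟩ := Multiset.map_eq_singleton.mp hmap
      have hdc : d ∈ {d | n ++ [d] ∈ T.nodes} := hmc d (Multiset.mem_singleton_self d)
      have hfd' : f d = ρ (n ++ [d]) := hf d hdc
      refine Or.inr ⟨d, hdc, q', hq', by rw [← hfd', hfd], ?_⟩
      intro d' hd' hne'
      have := hrest d' hd' (by simpa using hne')
      have hfd'' : f d' = ρ (n ++ [d']) := hf d' hd'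
      rw [← hfd'']
      simpa using this
    · -- leaf pair
      refine Or.inl ⟨?_, hne⟩
      intro d hd
      have hms : ms = 0 := by simpa using hmap
      exact absurd (hrest d hd (by simp [hms])) (by simp)
  -- the canonical path
  set cond : List D → Prop := fun n => ∃ d, n ++ [d] ∈ T.nodes ∧ (ρ (n ++ [d])).isSome with hcond
  set F : List D → List D := fun n => if h : cond n then n ++ [h.choose] else n with hF
  set g : ℕ → List D := fun k => F^[k] [] with hg
  have hg0 : g 0 = [] := rfl
  have hgsucc : ∀ k, g (k+1) = F (g k) := fun k => Function.iterate_succ_apply' F k []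
  have hinv : ∀ k, g k ∈ T.nodes ∧ (ρ (g k)).isSome := by
    intro k
    induction k with
    | zero => exact ⟨T.root_mem, by rw [hg0, h0]; rfl⟩
    | succ k ih =>
      rw [hgsucc]
      by_cases hc : cond (g k)
      · have hspec := hc.choose_spec
        show (if h : cond (g k) then g k ++ [h.choose] else g k) ∈ T.nodes ∧
          (ρ (if h : cond (g k) then g k ++ [h.choose] else g k)).isSome
        rw [dif_pos hc]
        exact ⟨hspec.1, hspec.2⟩
      · show (if h : cond (g k) then g k ++ [h.choose] else g k) ∈ T.nodes ∧
          (ρ (if h : cond (g k) then g k ++ [h.choose] else g k)).isSome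
        rw [dif_neg hc]
        exact ih
  set st : ℕ → B.Q := fun k => (ρ (g k)).get (hinv k).2 with hstdef
  have hst : ∀ k, ρ (g k) = some (st k) := fun k => (Option.some_get _).symm
  have hst0 : st 0 = B.init := by
    have := hst 0
    rw [hg0, h0] at this
    exact (Option.some.inj this).symm
  have htr : ∀ k, ∀ hc : cond (g k),
      g (k+1) = g k ++ [hc.choose] ∧
      st (k+1) ∈ B.δ (st k) (T.label (g k)) := by
    intro k hc
    have hgs : g (k+1) = g k ++ [hc.choose] := by
      rw [hgsucc]
      show (if h : cond (g k) then g k ++ [h.choose] else g k) = _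
      rw [dif_pos hc]
    rcases hstep (g k) (hinv k).1 (st k) (hst k) with ⟨hleaf, _⟩ | ⟨d, hd, q', hq', hρd, hoth⟩
    · exact absurd hc.choose_spec.1 (hleaf _)
    · have hchoose : hc.choose = d := by
        by_contra hne
        have := hoth hc.choose hc.choose_spec.1 hne
        have h2 := hc.choose_spec.2
        rw [this] at h2
        simp at h2
      refine ⟨hgs, ?_⟩
      have : ρ (g (k+1)) = some q' := by rw [hgs, hchoose]; exact hρd
      rw [hst (k+1)] at this
      rw [Option.some.inj this]
      exact hq'
  by_cases hall : ∀ k, cond (g k)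
  · -- infinite branch
    set b : ℕ → D := fun k => (hall k).choose with hbdef
    have hgb : ∀ k, g k = (List.range k).map b := by
      intro k
      induction k with
      | zero => simp [hg0]
      | succ k ih =>
        rw [(htr k (hall k)).1, List.range_succ]
        simp only [List.map_append, List.map_cons, List.map_nil]
        rw [← ih]
    have hbmem : ∀ k, (List.range k).map b ∈ T.nodes := fun k => (hgb k) ▸ (hinv k).1
    refine Or.inl ⟨b, hbmem, st, hst0, ?_, ?_⟩
    · intro k
      have := (htr k (hall k)).2
      rwa [hgb k] at this
    · have h2 := hpar b hbmem
      have heq : (fun k => B.toNPTA.ω (ρ ((List.range k).map b))) = fun k => B.ω (st k) + 2 := by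
        funext k
        rw [← hgb k, hst k]
      rw [heq] at h2
      exact (paritySeq_add_two _).mp h2
  · -- the path stops
    push_neg at hall
    obtain ⟨k1, hk1⟩ := hall
    have hex : ∃ k, ¬ cond (g k) := ⟨k1, hk1⟩
    set k₀ := Nat.find hex with hk₀def
    have hstop : ¬ cond (g k₀) := Nat.find_spec hex
    have hbefore : ∀ j, j < k₀ → cond (g j) := fun j hj => not_not.mp (Nat.find_min hex hj)
    have hlen : ∀ j, j ≤ k₀ → (g j).length = j := by
      intro j hj
      induction j with
      | zero => rw [hg0]; rfl
      | succ j ih =>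
        rw [(htr j (hbefore j (by omega))).1]
        simp [ih (by omega)]
    have hmono : ∀ j, g j <+: g (j+1) := by
      intro j
      rw [hgsucc]
      show g j <+: (if h : cond (g j) then g j ++ [h.choose] else g j)
      by_cases hc : cond (g j)
      · rw [dif_pos hc]; exact List.prefix_append _ _
      · rw [dif_neg hc]
    have hprefix : ∀ j i, g j <+: g (j + i) := by
      intro j i
      induction i with
      | zero => exact List.prefix_refl _
      | succ i ih => exact ih.trans (hmono (j + i))
    set n := g k₀ with hndef
    have hnlen : n.length = k₀ := hlen k₀ le_rfl
    have hnleaf : (∀ d, n ++ [d] ∉ T.nodes) ∧ (B.δ (st k₀) (T.label n)).Nonempty := by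
      rcases hstep n (hinv k₀).1 (st k₀) (hst k₀) with h | ⟨d, hd, q', _, hρd, _⟩
      · exact h
      · exact absurd ⟨d, hd, by rw [hρd]; rfl⟩ hstop
    have htake : ∀ j, j ≤ k₀ → n.take j = g j := by
      intro j hj
      have hp : g j <+: n := by
        have := hprefix j (k₀ - j)
        rwa [Nat.add_sub_cancel' hj] at this
      have := List.prefix_iff_eq_take.mp hp
      rw [hlen j hj] at this
      exact this.symm
    refine Or.inr ⟨n, (hinv k₀).1, hnleaf.1, ?_⟩
    refine ⟨fun k => if k ≤ k₀ then st k else hnleaf.2.choose, by simp [hst0], ?_⟩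
    intro k hklt
    have hwlen : ((List.range (n.length + 1)).map (fun k => T.label (n.take k))).length = k₀ + 1 := by
      simp [hnlen]
    have hk : k ≤ k₀ := by rw [hwlen] at hklt; omega
    have hwget : ((List.range (n.length + 1)).map (fun k => T.label (n.take k))).get ⟨k, hklt⟩
        = T.label (n.take k) := by simp
    rw [hwget]
    beta_reduce
    rcases Nat.lt_or_ge k k₀ with hlt | hge
    · rw [if_pos hk, if_pos (by omega : k + 1 ≤ k₀)]
      have := (htr k (hbefore k hlt)).2
      rwa [← htake k hk] at this
    · have hkeq : k = k₀ := by omega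
      subst hkeq
      rw [if_pos hk, if_neg (by omega : ¬ k₀ + 1 ≤ k₀)]
      have hfull : n.take k₀ = n := by
        rw [← hnlen]
        exact List.take_length
      rw [hfull]
      exact hnleaf.2.choose_spec

/-- for every non-alternating parity word automaton `B` there is a
non-alternating EU parity tree automaton `M` accepting exactly the trees
containing at least one branch (infinite, or finite maximal) whose word is
accepted by `B`; moreover `M` has one additional state beyond those of `B`, and
all its EU-pairs have existential parts of size at most 1 and universal parts of
size at most 1. -/
theorem stmt15 (A : Type) (B : NPWA A) :
    ∃ M : NPTA A,
      Nonempty (M.Q ≃ Option B.Q) ∧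
      (∀ q a, ∀ p ∈ M.δ q a, Multiset.card p.1 ≤ 1 ∧ p.2.Subsingleton) ∧
      (∀ (D : Type) (T : STree D A),
        M.Accepts T ↔
          ((∃ b : ℕ → D, (∀ k, (List.range k).map b ∈ T.nodes) ∧
              B.AcceptsInf (fun k => T.label ((List.range k).map b))) ∨
           (∃ n ∈ T.nodes, (∀ d, n ++ [d] ∉ T.nodes) ∧
              B.AcceptsFin
                ((List.range (n.length + 1)).map (fun k => T.label (n.take k)))))) := by
  refine ⟨B.toNPTA, ⟨Equiv.refl _⟩, ?_, ?_⟩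
  · intro q a p hp
    cases q with
    | none =>
      have hp' : p = ((0 : Multiset (Option B.Q)), ({none} : Set (Option B.Q))) := hp
      subst hp'
      exact ⟨by simp, Set.subsingleton_singleton⟩
    | some q =>
      have hp' : (∃ q' ∈ B.δ q a, p = ({some q'}, ({none} : Set (Option B.Q)))) ∨
          ((B.δ q a).Nonempty ∧ p = ((0 : Multiset (Option B.Q)), (∅ : Set (Option B.Q)))) := hp
      rcases hp' with ⟨q', _, rfl⟩ | ⟨_, rfl⟩
      · exact ⟨by simp, Set.subsingleton_singleton⟩
      · exact ⟨by simp, Set.subsingleton_empty⟩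
  · intro D T
    constructor
    · exact accepts_imp B T
    · rintro (⟨b, hb, hacc⟩ | ⟨n, hn, hmax, hacc⟩)
      · exact accepts_of_inf B T b hb hacc
      · exact accepts_of_fin B T n hn hmax hacc
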